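/- Let P ⊆ ℝⁿ be a fixed finite set of distinct generators, A ⊆ ℝⁿ a bounded measurable set containing P such that every intersection C(p) ∩ A has positive Lebesgue measure, and K : ℝⁿ → ℝ≥0 continuous with K(0) > 0. For h > 0, let f_h be the CVDE built on P with the restricted kernel K_h(p,x) = K((p − x)/h) · χ_A(x). Then, as h → +∞, the probability measures f_h dx converge in distribution (weakly) to the probability measure f̃ dvol of the Voronoi Density Estimator, where vol is Lebesgue measure restricted to A and f̃(x) = 1/(|P| · vol(C(x))). -/

import Mathlib

open MeasureTheory Metric Set Filter

noncomputable section

/-- The Voronoi cell of a generator `p` w.r.t. the finite set of generators `P`. -/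
def cell {n : ℕ} (P : Finset (EuclideanSpace ℝ (Fin n))) (p : EuclideanSpace ℝ (Fin n)) :
    Set (EuclideanSpace ℝ (Fin n)) :=
  {x | ∀ q ∈ P, dist x p ≤ dist x q}

/-- A choice of a nearest generator (the generator of the cell containing `x`;
uniquely determined off the cell boundaries). -/
noncomputable def nearest {n : ℕ} (P : Finset (EuclideanSpace ℝ (Fin n)))
    (x : EuclideanSpace ℝ (Fin n)) : EuclideanSpace ℝ (Fin n) :=
  if h : P.Nonempty then (P.exists_min_image (fun p => dist x p) h).choose else 0

/-- The Compactified Voronoi Density Estimator: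
`f(x) = K(p,x) / (|P| · vol_p(C(x)))` where `p` is the generator of `C(x)`. -/
noncomputable def cvde {n : ℕ} (P : Finset (EuclideanSpace ℝ (Fin n)))
    (K : EuclideanSpace ℝ (Fin n) → EuclideanSpace ℝ (Fin n) → ℝ)
    (x : EuclideanSpace ℝ (Fin n)) : ℝ :=
  K (nearest P x) x / (P.card * ∫ y in cell P (nearest P x), K (nearest P x) y)

/-- The Voronoi Density Estimator w.r.t. Lebesgue measure restricted to a bounded region
`A`: `f̃(x) = 1/(|P| · vol(C(x) ∩ A))`. -/
noncomputable def vde {n : ℕ} (P : Finset (EuclideanSpace ℝ (Fin n)))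
    (A : Set (EuclideanSpace ℝ (Fin n))) (x : EuclideanSpace ℝ (Fin n)) : ℝ :=
  1 / (P.card * (volume (cell P (nearest P x) ∩ A)).toReal)

/-! ### Auxiliary material -/

/-- The union of all bisector hyperplanes between distinct generators. -/
def bad {n : ℕ} (P : Finset (EuclideanSpace ℝ (Fin n))) : Set (EuclideanSpace ℝ (Fin n)) :=
  ⋃ p ∈ P, ⋃ q ∈ P, {x | p ≠ q ∧ dist x p = dist x q}

lemma isClosed_cell {n : ℕ} (P : Finset (EuclideanSpace ℝ (Fin n)))
    (p : EuclideanSpace ℝ (Fin n)) : IsClosed (cell P p) := by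
  have : cell P p = ⋂ q ∈ P, {x | dist x p ≤ dist x q} := by
    ext x; simp [cell]
  rw [this]
  exact isClosed_biInter fun q _ =>
    isClosed_le (continuous_id.dist continuous_const) (continuous_id.dist continuous_const)

lemma measurableSet_bad {n : ℕ} (P : Finset (EuclideanSpace ℝ (Fin n))) :
    MeasurableSet (bad P) := by
  refine MeasurableSet.biUnion P.countable_toSet fun p _ =>
    MeasurableSet.biUnion P.countable_toSet fun q _ => ?_
  by_cases h : p = q
  · have : {x : EuclideanSpace ℝ (Fin n) | p ≠ q ∧ dist x p = dist x q} = ∅ := by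
      ext x; simp [h]
    simp [this]
  · have : {x : EuclideanSpace ℝ (Fin n) | p ≠ q ∧ dist x p = dist x q}
        = {x | dist x p = dist x q} := by
      ext x; simp [h]
    rw [this]
    exact (isClosed_eq (continuous_id.dist continuous_const)
      (continuous_id.dist continuous_const)).measurableSet

lemma volume_bad {n : ℕ} (P : Finset (EuclideanSpace ℝ (Fin n))) : volume (bad P) = 0 := by
  refine measure_biUnion_null_iff P.countable_toSet |>.2 fun p _ =>
    measure_biUnion_null_iff P.countable_toSet |>.2 fun q _ => ?_
  by_cases h : p = q
  · have : {x : EuclideanSpace ℝ (Fin n) | p ≠ q ∧ dist x p = dist x q} = ∅ := by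
      ext x; simp [h]
    simp [this]
  · refine measure_mono_null
      (t := (AffineSubspace.perpBisector p q : Set (EuclideanSpace ℝ (Fin n)))) ?_ ?_
    · intro x hx
      exact (AffineSubspace.mem_perpBisector_iff_dist_eq).2 hx.2
    · exact MeasureTheory.Measure.addHaar_affineSubspace _ _ (by simpa using h)

lemma nearest_mem {n : ℕ} (P : Finset (EuclideanSpace ℝ (Fin n))) (hP : P.Nonempty)
    (x : EuclideanSpace ℝ (Fin n)) : nearest P x ∈ P := by
  rw [nearest, dif_pos hP]
  exact (P.exists_min_image (fun p => dist x p) hP).choose_spec.1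

lemma nearest_le {n : ℕ} (P : Finset (EuclideanSpace ℝ (Fin n))) (hP : P.Nonempty)
    (x : EuclideanSpace ℝ (Fin n)) : ∀ q ∈ P, dist x (nearest P x) ≤ dist x q := by
  rw [nearest, dif_pos hP]
  exact (P.exists_min_image (fun p => dist x p) hP).choose_spec.2

lemma mem_cell_nearest {n : ℕ} (P : Finset (EuclideanSpace ℝ (Fin n))) (hP : P.Nonempty)
    (x : EuclideanSpace ℝ (Fin n)) : x ∈ cell P (nearest P x) :=
  fun q hq => nearest_le P hP x q hq

lemma nearest_eq {n : ℕ} {P : Finset (EuclideanSpace ℝ (Fin n))} (hP : P.Nonempty)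
    {x : EuclideanSpace ℝ (Fin n)} (hx : x ∉ bad P) {p : EuclideanSpace ℝ (Fin n)}
    (hp : p ∈ P) (hxp : x ∈ cell P p) : nearest P x = p := by
  by_contra hne
  apply hx
  have h1 : dist x (nearest P x) ≤ dist x p := nearest_le P hP x p hp
  have h2 : dist x p ≤ dist x (nearest P x) := hxp _ (nearest_mem P hP x)
  simp only [bad, Set.mem_iUnion]
  exact ⟨nearest P x, nearest_mem P hP x, p, hp, hne, le_antisymm h1 h2⟩

lemma integral_indicator_one' {n : ℕ} {A : Set (EuclideanSpace ℝ (Fin n))}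
    (hA : MeasurableSet A) {s : Set (EuclideanSpace ℝ (Fin n))} (c : ℝ) :
    ∫ y in s, c * A.indicator (fun _ => (1:ℝ)) y = c * (volume (s ∩ A)).toReal := by
  rw [integral_const_mul]
  congr 1
  have h1 : ∫ y in s, A.indicator (fun _ => (1:ℝ)) y = ((volume.restrict s) A).toReal :=
    integral_indicator_one hA
  rw [h1, Measure.restrict_apply hA, inter_comm]

lemma D_tendsto {n : ℕ} {A : Set (EuclideanSpace ℝ (Fin n))} (hA : MeasurableSet A)
    (hAbdd : Bornology.IsBounded A) {K : EuclideanSpace ℝ (Fin n) → ℝ} (hKcont : Continuous K)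
    {p : EuclideanSpace ℝ (Fin n)} (hpA : p ∈ A) (s : Set (EuclideanSpace ℝ (Fin n))) :
    Tendsto (fun h : ℝ => ∫ y in s, K (h⁻¹ • (p - y)) * A.indicator (fun _ => (1:ℝ)) y) atTop
      (nhds (∫ y in s, K 0 * A.indicator (fun _ => (1:ℝ)) y)) := by
  obtain ⟨r, hAr⟩ := hAbdd.subset_closedBall 0
  set r' := max r 0 with hr'
  have hAr' : A ⊆ closedBall 0 r' := hAr.trans (closedBall_subset_closedBall (le_max_left _ _))
  obtain ⟨M, hM⟩ := (isCompact_closedBall (0 : EuclideanSpace ℝ (Fin n))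
    (2*r')).exists_bound_of_continuousOn hKcont.continuousOn
  refine tendsto_integral_filter_of_dominated_convergence (A.indicator fun _ => M) ?_ ?_ ?_ ?_
  · exact Filter.Eventually.of_forall fun h =>
      ((hKcont.comp ((continuous_const.sub continuous_id).const_smul h⁻¹)).aestronglyMeasurable.mul
        (measurable_const.indicator hA).aestronglyMeasurable)
  · filter_upwards [eventually_ge_atTop (1:ℝ)] with h hh
    refine Filter.Eventually.of_forall fun y => ?_
    by_cases hy : y ∈ A
    · rw [indicator_of_mem hy, indicator_of_mem hy, mul_one]
      have hp1 : (0:ℝ) < h := lt_of_lt_of_le one_pos hh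
      have hz : h⁻¹ • (p - y) ∈ closedBall (0 : EuclideanSpace ℝ (Fin n)) (2*r') := by
        rw [mem_closedBall_zero_iff, norm_smul, Real.norm_eq_abs, abs_of_pos (inv_pos.2 hp1)]
        have hb1 := mem_closedBall_zero_iff.1 (hAr' hpA)
        have hb2 := mem_closedBall_zero_iff.1 (hAr' hy)
        have h1 : ‖p - y‖ ≤ 2 * r' := le_trans (norm_sub_le _ _) (by linarith)
        have h2 : h⁻¹ ≤ 1 := inv_le_one_of_one_le₀ hh
        calc h⁻¹ * ‖p - y‖ ≤ 1 * (2*r') := mul_le_mul h2 h1 (norm_nonneg _) one_pos.le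
        _ = 2*r' := one_mul _
      exact hM _ hz
    · rw [indicator_of_notMem hy, indicator_of_notMem hy, mul_zero, norm_zero]
  · refine (integrable_indicator_iff hA).2 ?_
    refine integrableOn_const ?_
    rw [Measure.restrict_apply hA]
    exact (lt_of_le_of_lt (measure_mono inter_subset_left) hAbdd.measure_lt_top).ne
  · refine Filter.Eventually.of_forall fun y => ?_
    have h1 : Tendsto (fun h : ℝ => h⁻¹ • (p - y)) atTop (nhds ((0:ℝ) • (p - y))) :=
      tendsto_inv_atTop_zero.smul_const _
    rw [zero_smul] at h1
    exact ((hKcont.tendsto 0).comp h1).mul_const _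

lemma integral_withDensity_ofReal {α : Type*} [MeasurableSpace α] (μ : Measure α)
    {g : α → ℝ} (hg : Measurable g) (hg0 : ∀ x, 0 ≤ g x) (φ : α → ℝ) :
    ∫ x, φ x ∂(μ.withDensity fun x => ENNReal.ofReal (g x)) = ∫ x, g x * φ x ∂μ := by
  have h1 : (fun x => ENNReal.ofReal (g x)) = fun x => ((g x).toNNReal : ENNReal) := rfl
  rw [h1, integral_withDensity_eq_integral_smul hg.real_toNNReal φ]
  congr 1; funext x
  rw [NNReal.smul_def, Real.coe_toNNReal _ (hg0 x), smul_eq_mul]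

/-- summing over the disjoint pieces `cell p \ bad` picks out the nearest generator -/
lemma sum_indicator_eq {n : ℕ} {P : Finset (EuclideanSpace ℝ (Fin n))} (hP : P.Nonempty)
    (f : EuclideanSpace ℝ (Fin n) → EuclideanSpace ℝ (Fin n) → ℝ)
    {x : EuclideanSpace ℝ (Fin n)} (hx : x ∉ bad P) :
    (∑ p ∈ P, (cell P p \ bad P).indicator (f p) x) = f (nearest P x) x := by
  have hmem : nearest P x ∈ P := nearest_mem P hP x
  rw [Finset.sum_eq_single_of_mem _ hmem]
  · exact indicator_of_mem (Set.mem_diff_of_mem (mem_cell_nearest P hP x) hx) _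
  · intro q hq hne
    exact indicator_of_notMem (fun hxq => hne ((nearest_eq hP hx hq hxq.1).symm)) _

noncomputable def Dfun {n : ℕ} (P : Finset (EuclideanSpace ℝ (Fin n)))
    (A : Set (EuclideanSpace ℝ (Fin n))) (K : EuclideanSpace ℝ (Fin n) → ℝ) (h : ℝ)
    (p : EuclideanSpace ℝ (Fin n)) : ℝ :=
  ∫ y in cell P p, K (h⁻¹ • (p - y)) * A.indicator (fun _ => (1:ℝ)) y

noncomputable def Ffun {n : ℕ} (P : Finset (EuclideanSpace ℝ (Fin n)))
    (A : Set (EuclideanSpace ℝ (Fin n))) (K : EuclideanSpace ℝ (Fin n) → ℝ) (h : ℝ)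
    (x : EuclideanSpace ℝ (Fin n)) : ℝ :=
  ∑ p ∈ P, (cell P p \ bad P).indicator
    (fun x => K (h⁻¹ • (p - x)) * A.indicator (fun _ => (1:ℝ)) x / (P.card * Dfun P A K h p)) x

noncomputable def Gfun {n : ℕ} (P : Finset (EuclideanSpace ℝ (Fin n)))
    (A : Set (EuclideanSpace ℝ (Fin n))) (x : EuclideanSpace ℝ (Fin n)) : ℝ :=
  ∑ p ∈ P, (cell P p \ bad P).indicator
    (fun _ => 1 / (P.card * (volume (cell P p ∩ A)).toReal)) x

lemma cvde_eq {n : ℕ} (P : Finset (EuclideanSpace ℝ (Fin n)))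
    (A : Set (EuclideanSpace ℝ (Fin n))) (K : EuclideanSpace ℝ (Fin n) → ℝ) (h : ℝ)
    (x : EuclideanSpace ℝ (Fin n)) :
    cvde P (fun p y => K (h⁻¹ • (p - y)) * A.indicator (fun _ => (1:ℝ)) y) x
      = K (h⁻¹ • (nearest P x - x)) * A.indicator (fun _ => (1:ℝ)) x
        / (P.card * Dfun P A K h (nearest P x)) := rfl

lemma Ffun_val {n : ℕ} {P : Finset (EuclideanSpace ℝ (Fin n))} (hP : P.Nonempty)
    (A : Set (EuclideanSpace ℝ (Fin n))) (K : EuclideanSpace ℝ (Fin n) → ℝ) (h : ℝ)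
    {x : EuclideanSpace ℝ (Fin n)} (hx : x ∉ bad P) :
    Ffun P A K h x = K (h⁻¹ • (nearest P x - x)) * A.indicator (fun _ => (1:ℝ)) x
        / (P.card * Dfun P A K h (nearest P x)) :=
  sum_indicator_eq hP _ hx

lemma Gfun_val {n : ℕ} {P : Finset (EuclideanSpace ℝ (Fin n))} (hP : P.Nonempty)
    (A : Set (EuclideanSpace ℝ (Fin n))) {x : EuclideanSpace ℝ (Fin n)} (hx : x ∉ bad P) :
    Gfun P A x = vde P A x :=
  sum_indicator_eq hP (fun p _ => 1 / (P.card * (volume (cell P p ∩ A)).toReal)) hx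

lemma Dfun_nonneg {n : ℕ} {P : Finset (EuclideanSpace ℝ (Fin n))}
    {A : Set (EuclideanSpace ℝ (Fin n))} {K : EuclideanSpace ℝ (Fin n) → ℝ}
    (hK0 : ∀ x, 0 ≤ K x) (h : ℝ) (p : EuclideanSpace ℝ (Fin n)) :
    0 ≤ Dfun P A K h p :=
  integral_nonneg fun y => mul_nonneg (hK0 _) (indicator_nonneg (fun _ _ => zero_le_one) y)

lemma Ffun_nonneg {n : ℕ} {P : Finset (EuclideanSpace ℝ (Fin n))}
    {A : Set (EuclideanSpace ℝ (Fin n))} {K : EuclideanSpace ℝ (Fin n) → ℝ}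
    (hK0 : ∀ x, 0 ≤ K x) (h : ℝ) (x : EuclideanSpace ℝ (Fin n)) :
    0 ≤ Ffun P A K h x :=
  Finset.sum_nonneg fun p _ => indicator_nonneg
    (fun y _ => div_nonneg (mul_nonneg (hK0 _) (indicator_nonneg (fun _ _ => zero_le_one) y))
      (mul_nonneg (Nat.cast_nonneg _) (Dfun_nonneg hK0 h p))) x

lemma Gfun_nonneg {n : ℕ} {P : Finset (EuclideanSpace ℝ (Fin n))}
    {A : Set (EuclideanSpace ℝ (Fin n))} (x : EuclideanSpace ℝ (Fin n)) :
    0 ≤ Gfun P A x :=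
  Finset.sum_nonneg fun p _ => indicator_nonneg
    (fun _ _ => div_nonneg zero_le_one
      (mul_nonneg (Nat.cast_nonneg _) ENNReal.toReal_nonneg)) x

lemma Ffun_measurable {n : ℕ} {P : Finset (EuclideanSpace ℝ (Fin n))}
    {A : Set (EuclideanSpace ℝ (Fin n))} (hA : MeasurableSet A)
    {K : EuclideanSpace ℝ (Fin n) → ℝ} (hKcont : Continuous K) (h : ℝ) :
    Measurable (Ffun P A K h) := by
  refine Finset.measurable_sum _ fun p _ => Measurable.indicator ?_
    ((isClosed_cell P p).measurableSet.diff (measurableSet_bad P))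
  exact ((hKcont.comp ((continuous_const.sub continuous_id).const_smul h⁻¹)).measurable.mul
    (measurable_const.indicator hA)).div_const _

lemma Gfun_measurable {n : ℕ} {P : Finset (EuclideanSpace ℝ (Fin n))}
    {A : Set (EuclideanSpace ℝ (Fin n))} : Measurable (Gfun P A) :=
  Finset.measurable_sum _ fun p _ => measurable_const.indicator
    ((isClosed_cell P p).measurableSet.diff (measurableSet_bad P))

/-- as `h → +∞`, the CVDE measures `f_h dx` built with the restricted kernel
`K_h(p,x) = K((p−x)/h)·χ_A(x)` converge weakly (tested against bounded continuous
functions) to the VDE measure `f̃ dvol`, where `vol` is Lebesgue measure restricted to the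
bounded region `A ⊇ P`. -/
theorem cvde_tendsto_vde_of_bandwidth_infty {n : ℕ}
    (P : Finset (EuclideanSpace ℝ (Fin n))) (hP : P.Nonempty)
    (A : Set (EuclideanSpace ℝ (Fin n))) (hA : MeasurableSet A)
    (hAbdd : Bornology.IsBounded A)
    (hPA : (P : Set (EuclideanSpace ℝ (Fin n))) ⊆ A)
    (hpos : ∀ p ∈ P, 0 < volume (cell P p ∩ A))
    (K : EuclideanSpace ℝ (Fin n) → ℝ) (hKcont : Continuous K) (hK0 : ∀ x, 0 ≤ K x)
    (hK00 : 0 < K 0) :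
    ∀ φ : BoundedContinuousFunction (EuclideanSpace ℝ (Fin n)) ℝ,
      Tendsto (fun h : ℝ =>
          ∫ x, φ x ∂(volume.withDensity fun x =>
            ENNReal.ofReal (cvde P
              (fun p y => K (h⁻¹ • (p - y)) * A.indicator (fun _ => (1 : ℝ)) y) x)))
        atTop
        (nhds (∫ x, φ x ∂((volume.restrict A).withDensity fun x =>
          ENNReal.ofReal (vde P A x)))) := by
  intro φ
  have haeBad : ∀ᵐ x : EuclideanSpace ℝ (Fin n) ∂volume, x ∉ bad P := by
    rw [ae_iff]
    simpa using volume_bad P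
  have hcard : (1:ℝ) ≤ P.card := by exact_mod_cast Finset.card_pos.2 hP
  have hcard0 : (0:ℝ) < P.card := lt_of_lt_of_le one_pos hcard
  have hAfin : volume A < ⊤ := hAbdd.measure_lt_top
  have hvol : ∀ p ∈ P, 0 < (volume (cell P p ∩ A)).toReal := fun p hp =>
    ENNReal.toReal_pos (hpos p hp).ne'
      (lt_of_le_of_lt (measure_mono inter_subset_right) hAfin).ne
  have hDt : ∀ p ∈ P, Tendsto (fun h => Dfun P A K h p) atTop
      (nhds (K 0 * (volume (cell P p ∩ A)).toReal)) := by
    intro p hp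
    have := D_tendsto hA hAbdd hKcont (hPA hp) (cell P p)
    rwa [integral_indicator_one' hA (K 0)] at this
  -- rewrite the integrals against the withDensity measures
  have hLHS : ∀ h : ℝ, (∫ x, φ x ∂(volume.withDensity fun x =>
      ENNReal.ofReal (cvde P
        (fun p y => K (h⁻¹ • (p - y)) * A.indicator (fun _ => (1 : ℝ)) y) x)))
      = ∫ x, Ffun P A K h x * φ x := by
    intro h
    have h1 : (volume.withDensity fun x => ENNReal.ofReal (cvde P
        (fun p y => K (h⁻¹ • (p - y)) * A.indicator (fun _ => (1 : ℝ)) y) x))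
        = volume.withDensity fun x => ENNReal.ofReal (Ffun P A K h x) := by
      refine withDensity_congr_ae ?_
      filter_upwards [haeBad] with x hx
      rw [cvde_eq P A K h x, Ffun_val hP A K h hx]
    rw [h1, integral_withDensity_ofReal volume (Ffun_measurable hA hKcont h)
      (Ffun_nonneg hK0 h) (fun x => φ x)]
  have hRHS : (∫ x, φ x ∂((volume.restrict A).withDensity fun x =>
      ENNReal.ofReal (vde P A x)))
      = ∫ x, A.indicator (fun x => Gfun P A x * φ x) x := by
    have h1 : ((volume.restrict A).withDensity fun x => ENNReal.ofReal (vde P A x))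
        = (volume.restrict A).withDensity fun x => ENNReal.ofReal (Gfun P A x) := by
      refine withDensity_congr_ae ?_
      filter_upwards [ae_restrict_of_ae haeBad] with x hx
      rw [Gfun_val hP A hx]
    rw [h1, integral_withDensity_ofReal (volume.restrict A) Gfun_measurable
      Gfun_nonneg (fun x => φ x), ← integral_indicator hA]
  simp only [hLHS, hRHS]
  -- dominated convergence
  set c : EuclideanSpace ℝ (Fin n) → ℝ := fun p => K 0 * (volume (cell P p ∩ A)).toReal with hc
  have hcpos : ∀ p ∈ P, 0 < c p := fun p hp => mul_pos hK00 (hvol p hp)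
  have hPim : (P.image c).Nonempty := hP.image c
  set ε : ℝ := (P.image c).min' hPim with hε
  obtain ⟨p₀, hp₀, hp₀c⟩ := Finset.mem_image.1 ((P.image c).min'_mem hPim)
  have hε0 : 0 < ε := by rw [hε, ← hp₀c]; exact hcpos p₀ hp₀
  have hεle : ∀ p ∈ P, ε ≤ c p := fun p hp => Finset.min'_le _ _ (Finset.mem_image_of_mem c hp)
  obtain ⟨r, hAr⟩ := hAbdd.subset_closedBall 0
  set r' := max r 0 with hr'
  have hAr' : A ⊆ closedBall 0 r' := hAr.trans (closedBall_subset_closedBall (le_max_left _ _))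
  obtain ⟨M, hM⟩ := (isCompact_closedBall (0 : EuclideanSpace ℝ (Fin n))
    (2*r')).exists_bound_of_continuousOn hKcont.continuousOn
  have hr'0 : (0:ℝ) ≤ r' := le_max_right _ _
  have hM0 : 0 ≤ M := le_trans (norm_nonneg (K 0)) (hM 0 (mem_closedBall_self (by linarith)))
  have hKb : ∀ h : ℝ, 1 ≤ h → ∀ p ∈ P, ∀ x ∈ A, K (h⁻¹ • (p - x)) ≤ M := by
    intro h hh p hp x hxA
    have hp1 : (0:ℝ) < h := lt_of_lt_of_le one_pos hh
    have hz : h⁻¹ • (p - x) ∈ closedBall (0 : EuclideanSpace ℝ (Fin n)) (2*r') := by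
      rw [mem_closedBall_zero_iff, norm_smul, Real.norm_eq_abs, abs_of_pos (inv_pos.2 hp1)]
      have hb1 := mem_closedBall_zero_iff.1 (hAr' (hPA hp))
      have hb2 := mem_closedBall_zero_iff.1 (hAr' hxA)
      have h1 : ‖p - x‖ ≤ 2 * r' := le_trans (norm_sub_le _ _) (by linarith)
      have h2 : h⁻¹ ≤ 1 := inv_le_one_of_one_le₀ hh
      calc h⁻¹ * ‖p - x‖ ≤ 1 * (2*r') := mul_le_mul h2 h1 (norm_nonneg _) one_pos.le
      _ = 2*r' := one_mul _
    exact le_trans (le_abs_self _) ((Real.norm_eq_abs _) ▸ hM _ hz)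
  refine tendsto_integral_filter_of_dominated_convergence
    (A.indicator fun _ => (M/(ε/2)) * ‖φ‖) ?_ ?_ ?_ ?_
  · exact Filter.Eventually.of_forall fun h =>
      ((Ffun_measurable hA hKcont h).mul φ.continuous.measurable).aestronglyMeasurable
  · -- the uniform bound
    have hev : ∀ᶠ h : ℝ in atTop, ∀ p ∈ P, ε/2 ≤ Dfun P A K h p := by
      rw [eventually_all_finset]
      intro p hp
      exact (hDt p hp).eventually (eventually_ge_nhds
        (lt_of_lt_of_le (half_lt_self hε0) (hεle p hp)))
    filter_upwards [hev, eventually_ge_atTop (1:ℝ)] with h hev1 hh1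
    filter_upwards [haeBad] with x hx
    rw [Ffun_val hP A K h hx]
    set p₁ := nearest P x with hp₁def
    have hp₁ : p₁ ∈ P := nearest_mem P hP x
    by_cases hxA : x ∈ A
    · rw [indicator_of_mem hxA, indicator_of_mem hxA, mul_one]
      have hDlb : ε/2 ≤ Dfun P A K h p₁ := hev1 p₁ hp₁
      have hd2 : ε/2 ≤ (P.card : ℝ) * Dfun P A K h p₁ :=
        le_trans hDlb (le_mul_of_one_le_left (Dfun_nonneg hK0 h p₁) hcard)
      have hpos1 : (0:ℝ) < ε/2 := half_pos hε0
      have hdiv : K (h⁻¹ • (p₁ - x)) / ((P.card : ℝ) * Dfun P A K h p₁) ≤ M / (ε/2) :=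
        div_le_div₀ hM0 (hKb h hh1 p₁ hp₁ x hxA) hpos1 hd2
      rw [norm_mul, Real.norm_of_nonneg (div_nonneg (hK0 _)
        (mul_nonneg (Nat.cast_nonneg _) (Dfun_nonneg hK0 h p₁)))]
      exact mul_le_mul hdiv (φ.norm_coe_le_norm x) (norm_nonneg _)
        (div_nonneg hM0 hpos1.le)
    · rw [indicator_of_notMem hxA, indicator_of_notMem hxA, mul_zero, zero_div,
        zero_mul, norm_zero]
  · refine (integrable_indicator_iff hA).2 ?_
    exact integrableOn_const hAfin.ne
  · -- pointwise convergence
    filter_upwards [haeBad] with x hx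
    have hp₁ : nearest P x ∈ P := nearest_mem P hP x
    have hnum : Tendsto (fun h : ℝ => K (h⁻¹ • (nearest P x - x)) * A.indicator (fun _ => (1:ℝ)) x)
        atTop (nhds (K 0 * A.indicator (fun _ => (1:ℝ)) x)) := by
      have h1 : Tendsto (fun h : ℝ => h⁻¹ • (nearest P x - x)) atTop
          (nhds ((0:ℝ) • (nearest P x - x))) := tendsto_inv_atTop_zero.smul_const _
      rw [zero_smul] at h1
      exact ((hKcont.tendsto 0).comp h1).mul_const _
    have hden : Tendsto (fun h : ℝ => (P.card : ℝ) * Dfun P A K h (nearest P x)) atTop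
        (nhds ((P.card : ℝ) * c (nearest P x))) := (hDt _ hp₁).const_mul _
    have hden0 : (P.card : ℝ) * c (nearest P x) ≠ 0 := (mul_pos hcard0 (hcpos _ hp₁)).ne'
    have hlim : Tendsto (fun h : ℝ => Ffun P A K h x * φ x) atTop
        (nhds (K 0 * A.indicator (fun _ => (1:ℝ)) x / ((P.card : ℝ) * c (nearest P x)) * φ x)) := by
      refine Tendsto.congr (fun h => ?_) ((hnum.div hden hden0).mul_const (φ x))
      simp only [Pi.div_apply]
      rw [Ffun_val hP A K h hx]
    convert hlim using 2
    by_cases hxA : x ∈ A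
    · rw [indicator_of_mem hxA, indicator_of_mem hxA, mul_one, Gfun_val hP A hx, vde]
      have hv : (volume (cell P (nearest P x) ∩ A)).toReal ≠ 0 := (hvol _ hp₁).ne'
      have hcard0' : (P.card : ℝ) ≠ 0 := hcard0.ne'
      simp only [hc]
      field_simp
    · rw [indicator_of_notMem hxA, indicator_of_notMem hxA, mul_zero, zero_div, zero_mul]
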